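/- Let p be a prime with p ≡ 1 (mod 4), and let b be an integer with Legendre symbol ((b²−4)/p) = −1. In the quotient ring ℤ[x]/(x²+bx+1) with α the image of x, there is no positive integer n such that α^(2n) ≡ −1 (mod p), i.e., such that α^(2n) + 1 lies in the ideal generated by p. -/

import Mathlib

open Polynomial

theorem no_pow_cong_neg_one (p : ℕ) [Fact p.Prime] (hp4 : p % 4 = 1) (b : ℤ)
    (hb : legendreSym p (b ^ 2 - 4) = -1) :
    ¬ ∃ n : ℕ, 0 < n ∧
      (Ideal.Quotient.mk (Ideal.span {(X : ℤ[X]) ^ 2 + C b * X + C 1}) X) ^ (2 * n) + 1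
        ∈ Ideal.span {(p : ℤ[X] ⧸ Ideal.span {(X : ℤ[X]) ^ 2 + C b * X + C 1})} := by
  have hp := (Fact.out : p.Prime)
  have hp5 : 5 ≤ p := by
    have := hp.two_le
    rcases Nat.lt_or_ge p 5 with h | h
    · interval_cases p <;> simp_all
    · exact h
  rintro ⟨n, hn, hmem⟩
  rw [Ideal.mem_span_singleton] at hmem
  obtain ⟨s, hs⟩ := hmem
  obtain ⟨g, rfl⟩ := Ideal.Quotient.mk_surjective s
  set fZ : ℤ[X] := X ^ 2 + C b * X + C 1 with hfZ
  -- the polynomial identity in ℤ[X]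
  have h1 : fZ ∣ (X ^ (2 * n) + 1 - (p : ℤ[X]) * g) := by
    rw [← Ideal.mem_span_singleton, ← Ideal.Quotient.eq_zero_iff_mem]
    simp only [map_sub, map_add, map_pow, map_mul, map_one, map_natCast]
    linear_combination hs
  -- reduce mod p
  set q : (ZMod p)[X] := X ^ 2 + C ((b : ZMod p)) * X + C 1 with hq
  have h2 : q ∣ (X ^ (2 * n) + 1 : (ZMod p)[X]) := by
    have hmap := Polynomial.map_dvd (Int.castRingHom (ZMod p)) h1
    have e1 : (fZ.map (Int.castRingHom (ZMod p))) = q := by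
      simp [hfZ, hq, Polynomial.map_add, Polynomial.map_pow, Polynomial.map_mul]
    have e2 : ((X ^ (2 * n) + 1 - (p : ℤ[X]) * g).map (Int.castRingHom (ZMod p)))
        = X ^ (2 * n) + 1 := by
      simp [Polynomial.map_sub, Polynomial.map_add, Polynomial.map_pow, Polynomial.map_mul,
        Polynomial.map_natCast, ZMod.natCast_self]
    rwa [e1, e2] at hmap
  -- basic facts about q
  have hqmonic : q.Monic := by
    unfold q
    monicity!
  have hqdeg : q.natDegree = 2 := by
    unfold q
    compute_degree!
  have hnoroot : ∀ c : ZMod p, c ^ 2 + (b : ZMod p) * c + 1 ≠ 0 := by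
    intro c hc
    rw [legendreSym.eq_neg_one_iff] at hb
    apply hb
    refine ⟨2 * c + (b : ZMod p), ?_⟩
    push_cast
    linear_combination (-4 : ZMod p) * hc
  have hirr : Irreducible q := by
    rw [hqmonic.irreducible_iff_roots_eq_zero_of_degree_le_three (by omega) (by omega)]
    rw [Multiset.eq_zero_iff_forall_notMem]
    intro c hc
    rw [mem_roots hqmonic.ne_zero] at hc
    apply hnoroot c
    simpa [hq, IsRoot, eval_add, eval_pow, eval_mul] using hc
  haveI : Fact (Irreducible q) := ⟨hirr⟩
  -- work in the field K = AdjoinRoot q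
  set K := AdjoinRoot q with hK
  set β : K := AdjoinRoot.root q with hβdef
  set B : K := AdjoinRoot.of q ((b : ZMod p)) with hBdef
  have hrel : β ^ 2 + B * β + 1 = 0 := by
    have := AdjoinRoot.mk_self (f := q)
    rw [hq] at this
    rw [hβdef, hBdef]
    simpa [map_add, map_mul, map_pow, AdjoinRoot.mk_X, AdjoinRoot.mk_C] using this
  have hβ2n : β ^ (2 * n) + 1 = 0 := by
    obtain ⟨h, hh⟩ := h2
    have := congrArg (AdjoinRoot.mk q) hh
    simpa [map_add, map_pow, map_mul, AdjoinRoot.mk_X, AdjoinRoot.mk_self] using this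
  haveI : CharP K p := charP_of_injective_algebraMap (algebraMap (ZMod p) K).injective p
  -- -1 ≠ 1 in K
  have hneg : (1 : K) ≠ -1 := by
    intro h
    have h2K : ((2 : ℕ) : K) = 0 := by
      push_cast
      linear_combination h
    rw [CharP.cast_eq_zero_iff K p 2] at h2K
    have := Nat.le_of_dvd (by norm_num) h2K
    omega
  -- Frobenius
  have hfrobB : B ^ p = B := by
    rw [hBdef, ← map_pow, ZMod.pow_card]
  have hrel2 : (β ^ p) ^ 2 + B * β ^ p + 1 = 0 := by
    have h0 : ((β ^ 2 + B * β + 1) : K) ^ p = 0 := by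
      rw [hrel]
      exact zero_pow (by omega)
    have e : (β ^ 2) ^ p = (β ^ p) ^ 2 := by
      rw [← pow_mul, ← pow_mul, mul_comm]
    rw [add_pow_char, add_pow_char, mul_pow, one_pow, hfrobB, e] at h0
    exact h0
  have hcases : (β ^ p - β) * (β ^ p + β + B) = 0 := by
    linear_combination hrel2 - hrel
  rcases mul_eq_zero.mp hcases with hA | hA
  · -- case β^p = β : contradiction with irreducibility
    have hβp : β ^ p = β := by linear_combination hA
    have hdvd : q ∣ (X ^ p - X : (ZMod p)[X]) := by
      rw [← AdjoinRoot.mk_eq_zero]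
      simp only [map_sub, map_pow, AdjoinRoot.mk_X]
      rw [← hβdef, hβp, sub_self]
    obtain ⟨h, hh⟩ := hdvd
    have hXp : (X ^ p - X : (ZMod p)[X]) ≠ 0 :=
      FiniteField.X_pow_card_sub_X_ne_zero _ (by omega)
    have hh0 : h ≠ 0 := by
      rintro rfl
      rw [mul_zero] at hh
      exact hXp hh
    have hdegs : p = 2 + h.natDegree := by
      have := FiniteField.X_pow_card_sub_X_natDegree_eq (ZMod p) (p := p) (by omega)
      rw [hh, natDegree_mul hqmonic.ne_zero hh0, hqdeg] at this
      omega
    have hallroots : ∀ c : ZMod p, h.IsRoot c := by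
      intro c
      have he : eval c (X ^ p - X : (ZMod p)[X]) = 0 := by
        simp [ZMod.pow_card]
      rw [hh, eval_mul] at he
      have hqc : eval c q ≠ 0 := by
        intro h0
        apply hnoroot c
        simpa [hq, eval_add, eval_pow, eval_mul] using h0
      exact (mul_eq_zero.mp he).resolve_left hqc
    have hsub : (Finset.univ : Finset (ZMod p)) ⊆ h.roots.toFinset := by
      intro c _
      rw [Multiset.mem_toFinset, mem_roots hh0]
      exact hallroots c
    have hcard : p ≤ h.natDegree := by
      calc p = Fintype.card (ZMod p) := (ZMod.card p).symm
        _ = (Finset.univ : Finset (ZMod p)).card := (Finset.card_univ).symm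
        _ ≤ h.roots.toFinset.card := Finset.card_le_card hsub
        _ ≤ Multiset.card h.roots := h.roots.toFinset_card_le
        _ ≤ h.natDegree := h.card_roots'
    omega
  · -- case β^p = -β - B : then β^(p+1) = 1
    have hβp : β ^ (p + 1) = 1 := by
      rw [pow_succ]
      have : β ^ p = -β - B := by linear_combination hA
      rw [this]
      linear_combination -hrel
    obtain ⟨m, hm, hmodd⟩ : ∃ m, p + 1 = 2 * m ∧ m % 2 = 1 := ⟨(p + 1) / 2, by omega, by omega⟩
    have key : (1 : K) = -1 := by
      have e1 : (1 : K) = β ^ ((p + 1) * n) := by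
        rw [pow_mul, hβp, one_pow]
      have e2 : β ^ ((p + 1) * n) = (β ^ (2 * n)) ^ m := by
        rw [← pow_mul]
        congr 1
        rw [hm]
        ring
      have e3 : β ^ (2 * n) = -1 := by linear_combination hβ2n
      calc (1 : K) = β ^ ((p + 1) * n) := e1
        _ = (β ^ (2 * n)) ^ m := e2
        _ = (-1) ^ m := by rw [e3]
        _ = -1 := Odd.neg_one_pow (Nat.odd_iff.mpr hmodd)
    exact hneg key
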